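/- Let T be a finite tree (connected acyclic simple graph) with at least two vertices. Then there exists a function φ assigning to each edge e of T a complex number φ(e) of modulus one such that for every internal vertex v (a vertex of degree at least two), the sum of φ(e) over all edges e incident to v equals zero. -/

import Mathlib

set_option linter.unusedSectionVars false

open SimpleGraph Finset

namespace Stmt7Aux

variable {V : Type*} [Fintype V] [DecidableEq V] (G : SimpleGraph V) [DecidableRel G.Adj]

/-- parent of `v` towards root `r`: a neighbor strictly closer to `r`. -/
noncomputable def par (r v : V) : V :=
  if h : ∃ u, G.Adj v u ∧ G.dist u r + 1 = G.dist v r then h.choose else r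

noncomputable def zeta (u : V) : ℂ :=
  Complex.exp (2 * Real.pi * Complex.I / (G.degree u))

noncomputable def chl (r v : V) : Finset V := (G.neighborFinset v).erase (par G r v)

noncomputable def idx (r v w : V) : ℕ := (chl G r v).toList.idxOf w

noncomputable def aux (r : V) : ℕ → V → ℂ
  | 0, _ => 1
  | (n+1), v => aux r n (par G r v) * zeta G (par G r v) ^ (1 + idx G r (par G r v) v)

noncomputable def f (r v : V) : ℂ := aux G r (G.dist v r) v

lemma abs_zeta (u : V) : ‖zeta G u‖ = 1 := by
  have h : (2 * Real.pi * Complex.I / ((G.degree u : ℕ) : ℂ))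
      = ((2 * Real.pi / (G.degree u : ℕ) : ℝ) : ℂ) * Complex.I := by
    push_cast; ring
  rw [zeta, h, Complex.norm_exp_ofReal_mul_I]

lemma abs_aux (r : V) : ∀ n v, ‖aux G r n v‖ = 1 := by
  intro n
  induction n with
  | zero => intro v; simp [aux]
  | succ n ih => intro v; simp [aux, norm_mul, norm_pow, abs_zeta, ih]

lemma abs_f (r v : V) : ‖f G r v‖ = 1 := abs_aux G r _ v

variable {G}

lemma par_spec (hconn : G.Connected) {r v : V} (h : v ≠ r) :
    G.Adj v (par G r v) ∧ G.dist (par G r v) r + 1 = G.dist v r := by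
  have hd : G.dist v r ≠ 0 := fun h0 => h (hconn.dist_eq_zero_iff.mp h0)
  obtain ⟨p, hp⟩ := exists_walk_of_dist_ne_zero hd
  cases p with
  | nil => exact absurd rfl h
  | @cons _ b _ hadj q =>
    have hq : G.dist b r ≤ q.length := dist_le q
    obtain ⟨w, hw⟩ := hconn.exists_walk_length_eq_dist b r
    have h2 : G.dist v r ≤ G.dist b r + 1 := by
      have := dist_le (Walk.cons hadj w)
      simpa [Walk.length_cons, hw] using this
    simp only [Walk.length_cons] at hp
    have hb : G.dist b r + 1 = G.dist v r := by omega
    have hex : ∃ u, G.Adj v u ∧ G.dist u r + 1 = G.dist v r := ⟨b, hadj, hb⟩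
    rw [par, dif_pos hex]
    exact hex.choose_spec

lemma support_dist_le {a b x : V} (W : G.Walk a b) (hx : x ∈ W.support) :
    G.dist x b ≤ W.length := by
  have h1 : G.dist x b ≤ (W.dropUntil x hx).length := dist_le _
  have h2 := Walk.length_dropUntil_le W hx
  omega

lemma exists_shortest (hconn : G.Connected) (u r : V) :
    ∃ p : G.Walk u r, p.IsPath ∧ p.length = G.dist u r := by
  obtain ⟨p, hp⟩ := hconn.exists_walk_length_eq_dist u r
  refine ⟨p.bypass, p.bypass_isPath, le_antisymm ?_ (dist_le _)⟩
  calc p.bypass.length ≤ p.length := Walk.length_bypass_le p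
    _ = _ := hp

lemma unique_near (hconn : G.Connected) (hacyc : G.IsAcyclic) {r v u u' : V}
    (h : G.Adj v u) (h' : G.Adj v u')
    (hd : G.dist u r + 1 = G.dist v r) (hd' : G.dist u' r + 1 = G.dist v r) : u = u' := by
  obtain ⟨W, hWp, hWl⟩ := exists_shortest hconn u r
  obtain ⟨W', hWp', hWl'⟩ := exists_shortest hconn u' r
  have hvW : v ∉ W.support := by
    intro hx; have := support_dist_le W hx; omega
  have hvW' : v ∉ W'.support := by
    intro hx; have := support_dist_le W' hx; omega
  have hP := hacyc.path_unique ⟨Walk.cons h W, hWp.cons hvW⟩ ⟨Walk.cons h' W', hWp'.cons hvW'⟩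
  have h2 := congrArg (fun w : G.Walk v r => w.getVert 1) (congrArg Subtype.val hP)
  simpa using h2

lemma adj_dist_succ (hconn : G.Connected) (hacyc : G.IsAcyclic) {r u v : V}
    (h : G.Adj u v) :
    G.dist u r + 1 = G.dist v r ∨ G.dist v r + 1 = G.dist u r := by
  obtain ⟨w, hw⟩ := hconn.exists_walk_length_eq_dist v r
  have t1 : G.dist u r ≤ G.dist v r + 1 := by
    have := dist_le (Walk.cons h w); simpa [Walk.length_cons, hw] using this
  obtain ⟨w2, hw2⟩ := hconn.exists_walk_length_eq_dist u r
  have t2 : G.dist v r ≤ G.dist u r + 1 := by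
    have := dist_le (Walk.cons h.symm w2); simpa [Walk.length_cons, hw2] using this
  have hne : G.dist u r ≠ G.dist v r := by
    intro heq
    have h0 : G.dist u r ≠ 0 := by
      intro h0
      have hu := hconn.dist_eq_zero_iff.mp h0
      have hv := hconn.dist_eq_zero_iff.mp (heq ▸ h0)
      exact h.ne (hu.trans hv.symm)
    obtain ⟨W, hWp, hWl⟩ := exists_shortest hconn u r
    have hvW : v ∉ W.support := by
      intro hx
      have h1 : G.dist v r ≤ (W.dropUntil v hx).length := dist_le _
      have h2 : (W.takeUntil v hx).length + (W.dropUntil v hx).length = W.length := by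
        have h4 := congrArg Walk.length (W.take_spec hx)
        rwa [Walk.length_append] at h4
      have h3 : (W.takeUntil v hx).length ≠ 0 := by
        intro h3
        exact h.ne (Walk.eq_of_length_eq_zero h3)
      omega
    obtain ⟨W2, hW2p, hW2l⟩ := exists_shortest hconn v r
    have hP := hacyc.path_unique ⟨Walk.cons h.symm W, hWp.cons hvW⟩ ⟨W2, hW2p⟩
    have h2 := congrArg (fun w : G.Walk v r => w.length) (congrArg Subtype.val hP)
    simp only [Walk.length_cons] at h2
    omega
  omega

lemma parent_eq (hconn : G.Connected) (hacyc : G.IsAcyclic) {r u v : V}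
    (h : G.Adj u v) (hd : G.dist u r + 1 = G.dist v r) : par G r v = u := by
  have hvr : v ≠ r := by
    intro hv; subst hv; rw [dist_self] at hd; omega
  obtain ⟨ha, hb⟩ := par_spec hconn hvr
  exact unique_near hconn hacyc ha h.symm hb hd

lemma child_par (hconn : G.Connected) (hacyc : G.IsAcyclic) {r v w : V}
    (hw : w ∈ chl G r v) :
    G.Adj v w ∧ par G r w = v ∧ G.dist v r + 1 = G.dist w r := by
  rw [chl, Finset.mem_erase, mem_neighborFinset] at hw
  obtain ⟨hne, hadj⟩ := hw
  rcases adj_dist_succ hconn hacyc (r := r) hadj with hd | hd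
  · exact ⟨hadj, parent_eq hconn hacyc hadj hd, hd⟩
  · exact absurd (parent_eq hconn hacyc hadj.symm hd).symm hne

lemma f_child (hconn : G.Connected) (hacyc : G.IsAcyclic) {r v w : V}
    (hw : w ∈ chl G r v) :
    f G r w = f G r v * zeta G v ^ (1 + idx G r v w) := by
  obtain ⟨hadj, hpw, hdw⟩ := child_par hconn hacyc hw
  rw [f, f, ← hdw]
  show aux G r (G.dist v r + 1) w = _
  rw [aux, hpw]

lemma incidence_eq (v : V) :
    G.incidenceFinset v = (G.neighborFinset v).image (fun w => s(v, w)) := by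
  ext e
  induction e with
  | _ a b =>
    simp only [mem_incidenceFinset, mem_incidenceSet, Finset.mem_image, mem_neighborFinset]
    constructor
    · rintro ⟨hadj, hv⟩
      rw [Sym2.mem_iff] at hv
      rcases hv with rfl | rfl
      · exact ⟨b, hadj, rfl⟩
      · exact ⟨a, hadj.symm, Sym2.eq_swap⟩
    · rintro ⟨w, hadj, hw⟩
      have : v ∈ s(v, w) := Sym2.mem_mk_left v w
      rw [hw] at this
      refine ⟨?_, this⟩
      rw [← hw, mem_edgeSet]
      exact hadj

lemma sum_idx {W : Type*} [DecidableEq W] (s : Finset W) (F : ℕ → ℂ) :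
    ∑ w ∈ s, F (s.toList.idxOf w) = ∑ j ∈ range s.card, F j := by
  refine Finset.sum_bij' (fun w _ => s.toList.idxOf w)
    (fun n hn => s.toList.get ⟨n, by simpa [Finset.length_toList] using Finset.mem_range.mp hn⟩)
    ?_ ?_ ?_ ?_ ?_
  · intro a ha
    rw [Finset.mem_range, ← Finset.length_toList]
    exact List.idxOf_lt_length_iff.mpr (Finset.mem_toList.mpr ha)
  · intro n hn
    rw [← Finset.mem_toList]
    exact List.get_mem _ _
  · intro a ha
    exact List.idxOf_get _
  · intro n hn
    exact List.get_idxOf s.nodup_toList _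
  · intro a ha; rfl

lemma sum_idx' (r v : V) (F : ℕ → ℂ) :
    ∑ w ∈ chl G r v, F (idx G r v w) = ∑ j ∈ range (chl G r v).card, F j :=
  sum_idx _ F

end Stmt7Aux

open Stmt7Aux

/-- On a finite tree with at least two vertices there is an assignment of unit complex numbers
to the edges such that at every internal vertex (degree at least two) the values on the
incident edges sum to zero. -/
theorem stmt7 {V : Type*} [Fintype V] [DecidableEq V] (G : SimpleGraph V)
    [DecidableRel G.Adj] (hconn : G.Connected) (hacyc : G.IsAcyclic)
    (hcard : 1 < Fintype.card V) :
    ∃ φ : Sym2 V → ℂ,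
      (∀ e ∈ G.edgeSet, ‖φ e‖ = 1) ∧
      ∀ v : V, 2 ≤ G.degree v → ∑ e ∈ G.incidenceFinset v, φ e = 0 := by
  classical
  have hV : Nonempty V := Fintype.card_pos_iff.mp (by omega)
  obtain ⟨r⟩ := hV
  refine ⟨Sym2.lift ⟨fun a b => if G.dist a r < G.dist b r then f G r b
      else if G.dist b r < G.dist a r then f G r a else 0, ?_⟩, ?_, ?_⟩
  · intro a b
    simp only
    rcases lt_trichotomy (G.dist a r) (G.dist b r) with h | h | h
    · rw [if_pos h, if_neg (lt_asymm h), if_pos h]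
    · simp [h, lt_irrefl]
    · rw [if_neg (lt_asymm h), if_pos h, if_pos h]
  · intro e he
    induction e with
    | _ a b =>
      rw [mem_edgeSet] at he
      rw [Sym2.lift_mk]
      rcases adj_dist_succ hconn hacyc (r := r) he with hd | hd
      · simp only
        rw [if_pos (by omega)]
        exact abs_f G r b
      · simp only
        rw [if_neg (by omega), if_pos (by omega)]
        exact abs_f G r a
  · intro v hdeg
    have hinj : ∀ w1 ∈ G.neighborFinset v, ∀ w2 ∈ G.neighborFinset v,
        s(v, w1) = s(v, w2) → w1 = w2 := fun w1 _ w2 _ h => Sym2.congr_right.mp h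
    rw [incidence_eq, Finset.sum_image hinj]
    simp only [Sym2.lift_mk]
    have hd0 : G.degree v ≠ 0 := by omega
    have hprim : IsPrimitiveRoot (zeta G v) (G.degree v) :=
      Complex.isPrimitiveRoot_exp _ hd0
    have hgeom : ∑ j ∈ range (G.degree v), zeta G v ^ j = 0 :=
      hprim.geom_sum_eq_zero hdeg
    by_cases hvr : v = r
    · subst hvr
      have hpar : par G v v = v := by
        rw [par, dif_neg]
        rintro ⟨u, -, hd⟩
        rw [SimpleGraph.dist_self] at hd
        omega
      have hN : G.neighborFinset v = chl G v v := by
        rw [chl, hpar, Finset.erase_eq_of_notMem]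
        simp
      have hcardc : (chl G v v).card = G.degree v := by
        rw [← hN]; rfl
      have hf1 : f G v v = 1 := by
        rw [f, SimpleGraph.dist_self]
        simp [aux]
      rw [hN]
      have hsum : ∑ w ∈ chl G v v,
          (if G.dist v v < G.dist w v then f G v w
            else if G.dist w v < G.dist v v then f G v v else 0)
          = ∑ w ∈ chl G v v, zeta G v ^ (1 + idx G v v w) := by
        refine Finset.sum_congr rfl fun w hw => ?_
        obtain ⟨hadj, hpw, hdw⟩ := child_par hconn hacyc hw
        rw [if_pos (by omega), f_child hconn hacyc hw, hf1, one_mul]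
      rw [hsum, sum_idx' (G := G) v v (fun j => zeta G v ^ (1 + j)), hcardc]
      calc ∑ j ∈ range (G.degree v), zeta G v ^ (1 + j)
          = ∑ j ∈ range (G.degree v), zeta G v * zeta G v ^ j := by
            refine Finset.sum_congr rfl fun j _ => ?_
            rw [pow_add, pow_one]
        _ = zeta G v * ∑ j ∈ range (G.degree v), zeta G v ^ j := by
            rw [Finset.mul_sum]
        _ = 0 := by rw [hgeom, mul_zero]
    · obtain ⟨hadj, hdist⟩ := par_spec hconn hvr
      have hmem : par G r v ∈ G.neighborFinset v := by
        rwa [SimpleGraph.mem_neighborFinset]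
      have hnm : par G r v ∉ chl G r v := by
        rw [chl]; exact Finset.notMem_erase _ _
      have hN : G.neighborFinset v = insert (par G r v) (chl G r v) :=
        (Finset.insert_erase hmem).symm
      rw [hN, Finset.sum_insert hnm]
      have hcardc : (chl G r v).card = G.degree v - 1 := by
        rw [chl, Finset.card_erase_of_mem hmem]; rfl
      have hterm : (if G.dist v r < G.dist (par G r v) r then f G r (par G r v)
          else if G.dist (par G r v) r < G.dist v r then f G r v else 0) = f G r v := by
        rw [if_neg (by omega), if_pos (by omega)]
      have hsum : ∑ w ∈ chl G r v,
          (if G.dist v r < G.dist w r then f G r w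
            else if G.dist w r < G.dist v r then f G r v else 0)
          = ∑ w ∈ chl G r v, f G r v * zeta G v ^ (1 + idx G r v w) := by
        refine Finset.sum_congr rfl fun w hw => ?_
        obtain ⟨hadjw, hpw, hdw⟩ := child_par hconn hacyc hw
        rw [if_pos (by omega), f_child hconn hacyc hw]
      have hrest : ∑ j ∈ range (G.degree v - 1), zeta G v ^ (1 + j) = -1 := by
        have h2 := Finset.sum_range_succ' (fun j => zeta G v ^ j) (G.degree v - 1)
        rw [(by omega : G.degree v - 1 + 1 = G.degree v), hgeom] at h2
        have h3 : ∑ j ∈ range (G.degree v - 1), zeta G v ^ (1 + j)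
            = ∑ j ∈ range (G.degree v - 1), zeta G v ^ (j + 1) := by
          refine Finset.sum_congr rfl fun j _ => ?_
          rw [add_comm]
        simp only [pow_zero] at h2
        rw [h3]
        linear_combination -h2
      rw [hterm, hsum, ← Finset.mul_sum, sum_idx' (G := G) r v (fun j => zeta G v ^ (1 + j)), hcardc, hrest]
      ring
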